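/- For the lexicographic simulating functions at block length d, the pairs (U_L, V_L) = (f_{L,d}(X^d), g_{L,d}(Y^d)) and (U_{L,d'}, V_{L,d'}) for any d' > d satisfy d_TV(P_{U_L V_L}, P_{U_{L,d'} V_{L,d'}}) ≤ c·2^{−d} for a universal constant c, where d_TV is the sum of absolute differences of probabilities. -/

import Mathlib

/-- Numeric value of a binary string (MSB first), so that lexicographic order on strings
coincides with the order of values. -/
def lexVal (d : ℕ) (x : Fin d → Bool) : ℕ :=
  ∑ i : Fin d, if x i then 2 ^ (d - 1 - i.val) else 0

/-- Joint output distribution of the lexicographic simulating functions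
`f_{L,d}(x) = 1[x ⊏ x_c(d,a)]`, `g_{L,d}(y) = 1[y ⊏ y_c(d,b)]` (with `x_c(d,a)` the binary
representation of `⌈2^d a⌉`), under the doubly-symmetric binary source with correlation `ρ`
and uniform marginals. -/
noncomputable def lexDist (ρ a b : ℝ) (d : ℕ) : Bool × Bool → ℝ :=
  fun uv => ∑ x : Fin d → Bool, ∑ y : Fin d → Bool,
    if (decide (lexVal d x < ⌈(2 : ℝ) ^ d * a⌉₊) = uv.1 ∧
        decide (lexVal d y < ⌈(2 : ℝ) ^ d * b⌉₊) = uv.2)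
      then ∏ i, (if x i = y i then (1 + ρ) / 4 else (1 - ρ) / 4) else 0

lemma lexVal_succ (d : ℕ) (x : Fin (d+1) → Bool) :
    lexVal (d+1) x = (if x 0 then 2^d else 0) + lexVal d (fun i => x i.succ) := by
  simp only [lexVal]
  rw [Fin.sum_univ_succ]
  have h0 : d + 1 - 1 - (0 : Fin (d+1)).val = d := by simp
  rw [h0]
  congr 1
  apply Finset.sum_congr rfl
  intro i _
  have h : d + 1 - 1 - (i.succ).val = d - 1 - i.val := by
    simp only [Fin.val_succ]; omega
  rw [h]

lemma lexVal_lt (d : ℕ) (x : Fin d → Bool) : lexVal d x < 2 ^ d := by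
  induction d with
  | zero => simp [lexVal]
  | succ d ih =>
    rw [lexVal_succ]
    have := ih (fun i => x i.succ)
    have h2 : (if x 0 then 2^d else 0) ≤ 2^d := by split <;> omega
    have : 2^(d+1) = 2^d + 2^d := by ring
    omega

lemma lexVal_injective (d : ℕ) : Function.Injective (lexVal d) := by
  induction d with
  | zero => intro x y _; funext i; exact absurd i.isLt (by omega)
  | succ d ih =>
    intro x y h
    rw [lexVal_succ, lexVal_succ] at h
    have hx := lexVal_lt d (fun i => x i.succ)
    have hy := lexVal_lt d (fun i => y i.succ)
    have h0 : x 0 = y 0 := by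
      by_contra hne
      cases hx0 : x 0 <;> cases hy0 : y 0 <;> simp [hx0, hy0] at hne h <;> omega
    have htail : (fun i : Fin d => x i.succ) = (fun i : Fin d => y i.succ) := by
      apply ih
      rw [h0] at h
      omega
    funext i
    rcases Fin.eq_zero_or_eq_succ i with rfl | ⟨j, rfl⟩
    · exact h0
    · exact congrFun htail j

lemma lexVal_append (d n : ℕ) (x1 : Fin d → Bool) (x2 : Fin n → Bool) :
    lexVal (d+n) (Fin.append x1 x2) = lexVal d x1 * 2^n + lexVal n x2 := by
  rw [lexVal, Fin.sum_univ_add]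
  congr 1
  · rw [lexVal, Finset.sum_mul]
    apply Finset.sum_congr rfl
    intro i _
    have hi := i.isLt
    have : d + n - 1 - (Fin.castAdd n i).val = (d - 1 - i.val) + n := by
      simp [Fin.castAdd]; omega
    rw [Fin.append_left, this, pow_add]
    split <;> simp
  · apply Finset.sum_congr rfl
    intro i _
    have hi := i.isLt
    have : d + n - 1 - (Fin.natAdd d i).val = n - 1 - i.val := by
      simp [Fin.natAdd]; omega
    rw [Fin.append_right, this]

lemma sum_append_split {M : Type*} [AddCommMonoid M] (d n : ℕ) (F : (Fin (d+n) → Bool) → M) :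
    ∑ x : Fin (d+n) → Bool, F x
      = ∑ x1 : Fin d → Bool, ∑ x2 : Fin n → Bool, F (Fin.append x1 x2) := by
  have hbij : Function.Bijective
      (fun p : (Fin d → Bool) × (Fin n → Bool) => Fin.append p.1 p.2) := by
    constructor
    · rintro ⟨a1, a2⟩ ⟨b1, b2⟩ h
      have h1 : a1 = b1 := by funext i; simpa using congrFun h (Fin.castAdd n i)
      have h2 : a2 = b2 := by funext i; simpa using congrFun h (Fin.natAdd d i)
      simp only [Prod.mk.injEq]; exact ⟨h1, h2⟩
    · intro x
      exact ⟨⟨fun i => x (Fin.castAdd n i), fun i => x (Fin.natAdd d i)⟩,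
        Fin.append_castAdd_natAdd⟩
  have key : ∑ p : (Fin d → Bool) × (Fin n → Bool), F (Fin.append p.1 p.2)
      = ∑ x : Fin (d+n) → Bool, F x :=
    Fintype.sum_bijective _ hbij _ _ (fun p => rfl)
  rw [← key, Fintype.sum_prod_type]


lemma abs_ite_sub_ite (p q : Prop) [Decidable p] [Decidable q] (w : ℝ) (hw : 0 ≤ w) :
    |(if p then w else 0) - (if q then w else 0)| ≤ w := by
  split_ifs <;> simp [abs_of_nonneg hw, hw]

lemma sum_w (ρ : ℝ) (d : ℕ) (x : Fin d → Bool) :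
    ∑ y : Fin d → Bool, ∏ i, (if x i = y i then (1+ρ)/4 else (1-ρ)/4) = (1/2 : ℝ)^d := by
  rw [← Fintype.piFinset_univ, Finset.sum_prod_piFinset Finset.univ (fun (i : Fin d) (bb : Bool) => if x i = bb then (1+ρ)/4 else (1-ρ)/4)]
  have h : ∀ i : Fin d, (∑ b : Bool, if x i = b then (1+ρ)/4 else (1-ρ)/4) = (1/2 : ℝ) := by
    intro i
    cases hx : x i <;> simp [Fintype.sum_bool, hx] <;> ring
  rw [Finset.prod_congr rfl fun i _ => h i, Finset.prod_const, Finset.card_univ,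
    Fintype.card_fin]

lemma w_prod_nonneg (ρ : ℝ) (hρ1 : -1 ≤ ρ) (hρ2 : ρ ≤ 1) (d : ℕ) (x y : Fin d → Bool) :
    0 ≤ ∏ i, (if x i = y i then (1+ρ)/4 else (1-ρ)/4) := by
  apply Finset.prod_nonneg
  intro i _
  split <;> linarith

lemma main_bound (ρ a b : ℝ) (hρ1 : -1 ≤ ρ) (hρ2 : ρ ≤ 1) (d n : ℕ) (uv : Bool × Bool) :
    |lexDist ρ a b d uv - lexDist ρ a b (d+n) uv| ≤ 2 * (1/2 : ℝ)^d := by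
  set ma := ⌈(2 : ℝ) ^ (d+n) * a⌉₊ with hma
  set mb := ⌈(2 : ℝ) ^ (d+n) * b⌉₊ with hmb
  set Wd : (Fin d → Bool) → (Fin d → Bool) → ℝ :=
    fun x y => ∏ i, (if x i = y i then (1 + ρ) / 4 else (1 - ρ) / 4) with hWd
  set Wn : (Fin n → Bool) → (Fin n → Bool) → ℝ :=
    fun x y => ∏ i, (if x i = y i then (1 + ρ) / 4 else (1 - ρ) / 4) with hWn
  have hWd0 : ∀ x y, 0 ≤ Wd x y := fun x y => w_prod_nonneg ρ hρ1 hρ2 d x y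
  have hWn0 : ∀ x y, 0 ≤ Wn x y := fun x y => w_prod_nonneg ρ hρ1 hρ2 n x y
  -- ceiling equivalence
  have hceil : ∀ (t : ℝ) (v : ℕ),
      (v < ⌈(2:ℝ)^d * t⌉₊ ↔ v * 2^n < ⌈(2:ℝ)^(d+n) * t⌉₊) := by
    intro t v
    have h2n : (0:ℝ) < 2^n := by positivity
    rw [Nat.lt_ceil, Nat.lt_ceil]
    push_cast
    rw [pow_add, show (2:ℝ)^d * 2^n * t = (2^d * t) * 2^n from by ring]
    exact (mul_lt_mul_iff_left₀ h2n).symm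
  -- the "bad" events
  set DU : (Fin d → Bool) → Prop :=
    fun x1 => lexVal d x1 * 2^n < ma ∧ ma ≤ lexVal d x1 * 2^n + 2^n with hDUdef
  set DV : (Fin d → Bool) → Prop :=
    fun y1 => lexVal d y1 * 2^n < mb ∧ mb ≤ lexVal d y1 * 2^n + 2^n with hDVdef
  -- splitting the products
  have hsplitW : ∀ (x1 y1 : Fin d → Bool) (x2 y2 : Fin n → Bool),
      (∏ i : Fin (d+n),
        (if Fin.append x1 x2 i = Fin.append y1 y2 i then (1+ρ)/4 else (1-ρ)/4))
      = Wd x1 y1 * Wn x2 y2 := by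
    intro x1 y1 x2 y2
    rw [Fin.prod_univ_add]
    simp [hWd, hWn, Fin.append_left, Fin.append_right]
  have hone : ∑ x2 : Fin n → Bool, ∑ y2 : Fin n → Bool, Wn x2 y2 = 1 := by
    have : ∀ x2 : Fin n → Bool, ∑ y2 : Fin n → Bool, Wn x2 y2 = (1/2 : ℝ)^n :=
      fun x2 => sum_w ρ n x2
    rw [Finset.sum_congr rfl fun x2 _ => this x2, Finset.sum_const, Finset.card_univ,
      Fintype.card_fun, Fintype.card_bool, Fintype.card_fin, nsmul_eq_mul]
    push_cast
    rw [← mul_pow]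
    norm_num
  -- expand lexDist at level d
  have hPd : lexDist ρ a b d uv
      = ∑ x1 : Fin d → Bool, ∑ x2 : Fin n → Bool, ∑ y1 : Fin d → Bool, ∑ y2 : Fin n → Bool,
          if (decide (lexVal d x1 < ⌈(2:ℝ)^d * a⌉₊) = uv.1 ∧
              decide (lexVal d y1 < ⌈(2:ℝ)^d * b⌉₊) = uv.2)
            then Wd x1 y1 * Wn x2 y2 else 0 := by
    rw [lexDist]
    apply Finset.sum_congr rfl; intro x1 _
    rw [Finset.sum_comm]
    apply Finset.sum_congr rfl; intro y1 _
    by_cases hC : (decide (lexVal d x1 < ⌈(2:ℝ)^d * a⌉₊) = uv.1 ∧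
        decide (lexVal d y1 < ⌈(2:ℝ)^d * b⌉₊) = uv.2)
    · simp only [if_pos hC]
      simp_rw [← Finset.mul_sum]
      rw [hone, mul_one]
    · simp only [if_neg hC, Finset.sum_const_zero]
  -- expand lexDist at level d+n
  have hPn : lexDist ρ a b (d+n) uv
      = ∑ x1 : Fin d → Bool, ∑ x2 : Fin n → Bool, ∑ y1 : Fin d → Bool, ∑ y2 : Fin n → Bool,
          if (decide (lexVal d x1 * 2^n + lexVal n x2 < ma) = uv.1 ∧
              decide (lexVal d y1 * 2^n + lexVal n y2 < mb) = uv.2)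
            then Wd x1 y1 * Wn x2 y2 else 0 := by
    rw [lexDist, sum_append_split d n]
    apply Finset.sum_congr rfl; intro x1 _
    apply Finset.sum_congr rfl; intro x2 _
    rw [sum_append_split d n]
    apply Finset.sum_congr rfl; intro y1 _
    apply Finset.sum_congr rfl; intro y2 _
    rw [lexVal_append, lexVal_append, hsplitW]
  -- pointwise bound
  have hpt : ∀ (x1 y1 : Fin d → Bool) (x2 y2 : Fin n → Bool),
      |(if (decide (lexVal d x1 < ⌈(2:ℝ)^d * a⌉₊) = uv.1 ∧
            decide (lexVal d y1 < ⌈(2:ℝ)^d * b⌉₊) = uv.2)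
          then Wd x1 y1 * Wn x2 y2 else 0)
        - (if (decide (lexVal d x1 * 2^n + lexVal n x2 < ma) = uv.1 ∧
               decide (lexVal d y1 * 2^n + lexVal n y2 < mb) = uv.2)
            then Wd x1 y1 * Wn x2 y2 else 0)|
      ≤ ((if DU x1 then (1:ℝ) else 0) + (if DV y1 then (1:ℝ) else 0))
          * (Wd x1 y1 * Wn x2 y2) := by
    intro x1 y1 x2 y2
    have hw : 0 ≤ Wd x1 y1 * Wn x2 y2 := mul_nonneg (hWd0 _ _) (hWn0 _ _)
    by_cases hDU : DU x1
    · refine (abs_ite_sub_ite _ _ _ hw).trans ?_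
      refine le_mul_of_one_le_left hw ?_
      rw [if_pos hDU]
      split <;> norm_num
    · by_cases hDV : DV y1
      · refine (abs_ite_sub_ite _ _ _ hw).trans ?_
        refine le_mul_of_one_le_left hw ?_
        rw [if_pos hDV]
        split <;> norm_num
      · -- conditions agree
        have hsx := lexVal_lt n x2
        have hsy := lexVal_lt n y2
        simp only [hDUdef, not_and, not_le, not_lt] at hDU
        simp only [hDVdef, not_and, not_le, not_lt] at hDV
        have hA : decide (lexVal d x1 < ⌈(2:ℝ)^d * a⌉₊)
            = decide (lexVal d x1 * 2^n + lexVal n x2 < ma) := by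
          rw [decide_eq_decide, hceil a (lexVal d x1), ← hma]
          omega
        have hB : decide (lexVal d y1 < ⌈(2:ℝ)^d * b⌉₊)
            = decide (lexVal d y1 * 2^n + lexVal n y2 < mb) := by
          rw [decide_eq_decide, hceil b (lexVal d y1), ← hmb]
          omega
        rw [hA, hB, sub_self, abs_zero]
        positivity
  -- at most one bad row / column
  have hcardU : (Finset.univ.filter fun x1 : Fin d → Bool => DU x1).card ≤ 1 := by
    rw [Finset.card_le_one]
    intro p hp q hq
    rw [Finset.mem_filter] at hp hq
    have hp2 := hp.2; have hq2 := hq.2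
    simp only [hDUdef] at hp2 hq2
    apply lexVal_injective d
    have h2n : 0 < 2^n := Nat.pow_pos (n := n) (by norm_num)
    nlinarith [hp2.1, hp2.2, hq2.1, hq2.2]
  have hcardV : (Finset.univ.filter fun y1 : Fin d → Bool => DV y1).card ≤ 1 := by
    rw [Finset.card_le_one]
    intro p hp q hq
    rw [Finset.mem_filter] at hp hq
    have hp2 := hp.2; have hq2 := hq.2
    simp only [hDVdef] at hp2 hq2
    apply lexVal_injective d
    have h2n : 0 < 2^n := Nat.pow_pos (n := n) (by norm_num)
    nlinarith [hp2.1, hp2.2, hq2.1, hq2.2]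
  -- inner mass
  have hmass : ∀ x1 : Fin d → Bool,
      ∑ x2 : Fin n → Bool, ∑ y1 : Fin d → Bool, ∑ y2 : Fin n → Bool,
        Wd x1 y1 * Wn x2 y2 = (1/2 : ℝ)^d := by
    intro x1
    have h1 : ∀ x2 : Fin n → Bool, ∑ y1 : Fin d → Bool, ∑ y2 : Fin n → Bool,
        Wd x1 y1 * Wn x2 y2 = (1/2 : ℝ)^d * (1/2 : ℝ)^n := by
      intro x2
      rw [← Finset.sum_mul_sum]
      rw [sum_w ρ d x1, sum_w ρ n x2]
    rw [Finset.sum_congr rfl fun x2 _ => h1 x2, Finset.sum_const, Finset.card_univ,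
      Fintype.card_fun, Fintype.card_bool, Fintype.card_fin, nsmul_eq_mul]
    push_cast
    rw [show ((2:ℝ)^n * ((1/2)^d * (1/2)^n)) = ((2 * (1/2))^n * (1/2)^d) from by
      rw [mul_pow]; ring]
    norm_num
  -- put it together
  rw [hPd, hPn]
  have step1 : |(∑ x1 : Fin d → Bool, ∑ x2 : Fin n → Bool, ∑ y1 : Fin d → Bool,
        ∑ y2 : Fin n → Bool,
          if (decide (lexVal d x1 < ⌈(2:ℝ)^d * a⌉₊) = uv.1 ∧
              decide (lexVal d y1 < ⌈(2:ℝ)^d * b⌉₊) = uv.2)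
            then Wd x1 y1 * Wn x2 y2 else 0)
      - ∑ x1 : Fin d → Bool, ∑ x2 : Fin n → Bool, ∑ y1 : Fin d → Bool,
        ∑ y2 : Fin n → Bool,
          if (decide (lexVal d x1 * 2^n + lexVal n x2 < ma) = uv.1 ∧
              decide (lexVal d y1 * 2^n + lexVal n y2 < mb) = uv.2)
            then Wd x1 y1 * Wn x2 y2 else 0|
      ≤ ∑ x1 : Fin d → Bool, ∑ x2 : Fin n → Bool, ∑ y1 : Fin d → Bool,
        ∑ y2 : Fin n → Bool,
          ((if DU x1 then (1:ℝ) else 0) + (if DV y1 then (1:ℝ) else 0))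
            * (Wd x1 y1 * Wn x2 y2) := by
    simp_rw [← Finset.sum_sub_distrib]
    refine (Finset.abs_sum_le_sum_abs _ _).trans (Finset.sum_le_sum fun x1 _ => ?_)
    refine (Finset.abs_sum_le_sum_abs _ _).trans (Finset.sum_le_sum fun x2 _ => ?_)
    refine (Finset.abs_sum_le_sum_abs _ _).trans (Finset.sum_le_sum fun y1 _ => ?_)
    refine (Finset.abs_sum_le_sum_abs _ _).trans (Finset.sum_le_sum fun y2 _ => ?_)
    exact hpt x1 y1 x2 y2
  refine step1.trans ?_
  simp_rw [add_mul, Finset.sum_add_distrib]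
  have hU : ∑ x1 : Fin d → Bool, ∑ x2 : Fin n → Bool, ∑ y1 : Fin d → Bool,
      ∑ y2 : Fin n → Bool,
        (if DU x1 then (1:ℝ) else 0) * (Wd x1 y1 * Wn x2 y2) ≤ (1/2 : ℝ)^d := by
    have hx1 : ∀ x1 : Fin d → Bool, ∑ x2 : Fin n → Bool, ∑ y1 : Fin d → Bool,
        ∑ y2 : Fin n → Bool, (if DU x1 then (1:ℝ) else 0) * (Wd x1 y1 * Wn x2 y2)
        = (if DU x1 then (1:ℝ) else 0) * (1/2 : ℝ)^d := by
      intro x1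
      simp_rw [← Finset.mul_sum]
      congr 1
      have h2 : ∀ x2 : Fin n → Bool,
          (∑ y1 : Fin d → Bool, Wd x1 y1 * ∑ y2 : Fin n → Bool, Wn x2 y2)
          = (1/2:ℝ)^d * (1/2:ℝ)^n := by
        intro x2
        rw [show (∑ y2 : Fin n → Bool, Wn x2 y2) = (1/2:ℝ)^n from sum_w ρ n x2,
          ← Finset.sum_mul, show (∑ y1 : Fin d → Bool, Wd x1 y1) = (1/2:ℝ)^d from sum_w ρ d x1]
      rw [Finset.sum_congr rfl fun x2 _ => h2 x2, Finset.sum_const, Finset.card_univ,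
        Fintype.card_fun, Fintype.card_bool, Fintype.card_fin, nsmul_eq_mul]
      push_cast
      rw [show ((2:ℝ)^n * ((1/2)^d * (1/2)^n)) = ((2 * (1/2))^n * (1/2)^d) from by
        rw [mul_pow]; ring]
      norm_num
    rw [Finset.sum_congr rfl fun x1 _ => hx1 x1]
    simp_rw [ite_mul, one_mul, zero_mul]
    rw [← Finset.sum_filter]
    rw [Finset.sum_const]
    calc ((Finset.univ.filter fun x1 : Fin d → Bool => DU x1).card : ℕ) • ((1/2:ℝ)^d)
        = ((Finset.univ.filter fun x1 : Fin d → Bool => DU x1).card : ℝ) * (1/2:ℝ)^d := by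
          rw [nsmul_eq_mul]
      _ ≤ 1 * (1/2:ℝ)^d := by
          apply mul_le_mul_of_nonneg_right _ (by positivity)
          exact_mod_cast hcardU
      _ = (1/2:ℝ)^d := one_mul _
  have hV : ∑ x1 : Fin d → Bool, ∑ x2 : Fin n → Bool, ∑ y1 : Fin d → Bool,
      ∑ y2 : Fin n → Bool,
        (if DV y1 then (1:ℝ) else 0) * (Wd x1 y1 * Wn x2 y2) ≤ (1/2 : ℝ)^d := by
    have hswap : ∀ (x1 y1 : Fin d → Bool), Wd x1 y1 = Wd y1 x1 := by
      intro x1 y1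
      apply Finset.prod_congr rfl
      intro i _
      simp only [hWd, eq_comm]
    have hx1 : ∀ x1 : Fin d → Bool,
        (∑ x2 : Fin n → Bool, ∑ y1 : Fin d → Bool, ∑ y2 : Fin n → Bool,
          (if DV y1 then (1:ℝ) else 0) * (Wd x1 y1 * Wn x2 y2))
        = ∑ y1 : Fin d → Bool, (if DV y1 then (1:ℝ) else 0) * Wd x1 y1 := by
      intro x1
      rw [Finset.sum_comm]
      apply Finset.sum_congr rfl; intro y1 _
      simp_rw [show ∀ (x2 y2 : Fin n → Bool),
          (if DV y1 then (1:ℝ) else 0) * (Wd x1 y1 * Wn x2 y2)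
          = ((if DV y1 then (1:ℝ) else 0) * Wd x1 y1) * Wn x2 y2 from fun _ _ => by ring,
        ← Finset.mul_sum]
      rw [hone, mul_one]
    rw [Finset.sum_congr rfl fun x1 _ => hx1 x1, Finset.sum_comm]
    have hy1 : ∀ y1 : Fin d → Bool,
        (∑ x1 : Fin d → Bool, (if DV y1 then (1:ℝ) else 0) * Wd x1 y1)
        = (if DV y1 then (1:ℝ) else 0) * (1/2:ℝ)^d := by
      intro y1
      rw [← Finset.mul_sum]
      congr 1
      rw [Finset.sum_congr rfl fun x1 _ => hswap x1 y1]
      exact sum_w ρ d y1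
    rw [Finset.sum_congr rfl fun y1 _ => hy1 y1]
    simp_rw [ite_mul, one_mul, zero_mul]
    rw [← Finset.sum_filter, Finset.sum_const]
    calc ((Finset.univ.filter fun y1 : Fin d → Bool => DV y1).card : ℕ) • ((1/2:ℝ)^d)
        = ((Finset.univ.filter fun y1 : Fin d → Bool => DV y1).card : ℝ) * (1/2:ℝ)^d := by
          rw [nsmul_eq_mul]
      _ ≤ 1 * (1/2:ℝ)^d := by
          apply mul_le_mul_of_nonneg_right _ (by positivity)
          exact_mod_cast hcardV
      _ = (1/2:ℝ)^d := one_mul _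
  calc _ ≤ (1/2 : ℝ)^d + (1/2 : ℝ)^d := add_le_add hU hV
    _ = 2 * (1/2 : ℝ)^d := by ring

/-- There is a universal constant `c > 0` such that for all target marginals
`a, b ∈ [0,1]`, all correlations `ρ ∈ [-1,1]`, and all block lengths `d < d'`, the output
distributions of the lexicographic simulating functions satisfy
`d_TV(P_{U_L V_L}, P_{U_{L,d'} V_{L,d'}}) ≤ c · 2^{−d}`. -/
theorem stmt_19 :
    ∃ c : ℝ, 0 < c ∧ ∀ (ρ a b : ℝ), -1 ≤ ρ → ρ ≤ 1 →
      0 ≤ a → a ≤ 1 → 0 ≤ b → b ≤ 1 →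
      ∀ d d' : ℕ, d < d' →
        ∑ uv : Bool × Bool, |lexDist ρ a b d uv - lexDist ρ a b d' uv|
          ≤ c * ((2 : ℝ) ^ d)⁻¹ := by
  refine ⟨8, by norm_num, ?_⟩
  intro ρ a b hρ1 hρ2 ha0 _ hb0 _ d d' hdd
  obtain ⟨n, rfl⟩ : ∃ n, d' = d + n := ⟨d' - d, by omega⟩
  calc ∑ uv : Bool × Bool, |lexDist ρ a b d uv - lexDist ρ a b (d+n) uv|
      ≤ ∑ _uv : Bool × Bool, 2 * (1/2 : ℝ)^d :=
        Finset.sum_le_sum fun uv _ => main_bound ρ a b hρ1 hρ2 d n uv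
    _ = 8 * ((2 : ℝ)^d)⁻¹ := by
        rw [Finset.sum_const, Finset.card_univ]
        have : (1/2 : ℝ)^d = ((2:ℝ)^d)⁻¹ := by rw [one_div, inv_pow]
        simp [this]
        ring
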